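/- arXiv:1705.02473 — 2 statements merged into one kernel-verified Lean document; each statement's English description precedes it below -/
import Mathlib

section
/- For the crisis model, with d_1^α = (1/(σ√T))·(ln((S_0 + α/σ)/(K + (α/σ)e^{rT})) + (r + σ²/2)T) and d_2^α = d_1^α - σ√T, the discounted expected payoff E[e^{-rT}(S_T - K)^+] equals (S_0 + α/σ)Φ(d_1^α) - (Ke^{-rT} + α/σ)Φ(d_2^α), where Φ is the standard normal CDF. -/
open Real MeasureTheory ProbabilityTheory Set
open scoped NNReal ENNReal

/-- Standard normal CDF. -/
noncomputable def Phi (d : ℝ) : ℝ :=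
  ∫ u in Set.Iic d, Real.exp (-u ^ 2 / 2) / Real.sqrt (2 * Real.pi)

lemma phi_eq (u : ℝ) : Real.exp (-u ^ 2 / 2) / Real.sqrt (2 * Real.pi)
    = Real.exp (-(1/2) * u ^ 2) * (Real.sqrt (2 * Real.pi))⁻¹ := by
  rw [div_eq_mul_inv]; ring_nf

lemma phi_integrable : Integrable (fun u : ℝ => Real.exp (-u ^ 2 / 2) / Real.sqrt (2 * Real.pi)) := by
  simp_rw [phi_eq]
  exact (integrable_exp_neg_mul_sq (by norm_num)).mul_const _

lemma setIntegral_Ioi_sub (f : ℝ → ℝ) (a c : ℝ) :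
    ∫ x in Ioi a, f (x - c) = ∫ x in Ioi (a - c), f x := by
  have A : MeasurableEmbedding (fun x : ℝ => x - c) :=
    (Homeomorph.subRight c).isClosedEmbedding.measurableEmbedding
  have h := A.setIntegral_map (μ := volume) f (Ioi (a - c))
  have hmap : Measure.map (fun x : ℝ => x - c) volume = volume := by
    simp_rw [sub_eq_add_neg]
    exact map_add_right_eq_self volume (-c)
  rw [hmap] at h
  have hpre : (fun x : ℝ => x - c) ⁻¹' Ioi (a - c) = Ioi a := by
    ext x; simp [sub_lt_sub_iff_right]
  rw [hpre] at h
  exact h.symm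

lemma integral_phi_Ioi (a : ℝ) :
    ∫ u in Ioi a, Real.exp (-u ^ 2 / 2) / Real.sqrt (2 * Real.pi) = Phi (-a) := by
  have h := integral_comp_neg_Iic (-a) (fun u : ℝ => Real.exp (-u ^ 2 / 2) / Real.sqrt (2 * Real.pi))
  rw [neg_neg] at h
  rw [Phi, ← h]
  congr 1 with u
  rw [neg_pow]
  norm_num

lemma exp_part_eq (s u : ℝ) :
    Real.exp (s * u) * (Real.exp (-u ^ 2 / 2) / Real.sqrt (2 * Real.pi))
      = Real.exp (s ^ 2 / 2) * (Real.exp (-(u - s) ^ 2 / 2) / Real.sqrt (2 * Real.pi)) := by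
  have h2 : Real.exp (s * u) * Real.exp (-u ^ 2 / 2)
      = Real.exp (s ^ 2 / 2) * Real.exp (-(u - s) ^ 2 / 2) := by
    rw [← Real.exp_add, ← Real.exp_add]; ring_nf
  rw [← mul_div_assoc, h2, mul_div_assoc]

lemma integrable_exp_part (s : ℝ) :
    Integrable (fun u : ℝ => Real.exp (s * u) * (Real.exp (-u ^ 2 / 2) / Real.sqrt (2 * Real.pi))) := by
  simp_rw [exp_part_eq, phi_eq]
  have h : Integrable (fun u : ℝ => Real.exp (-(1/2) * (u - s) ^ 2)) :=
    (integrable_exp_neg_mul_sq (by norm_num : (0:ℝ) < 1/2)).comp_sub_right s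
  exact ((h.mul_const _).const_mul _)

lemma key_exp (s a : ℝ) :
    ∫ u in Ioi a, Real.exp (s * u) * (Real.exp (-u ^ 2 / 2) / Real.sqrt (2 * Real.pi))
      = Real.exp (s ^ 2 / 2) * Phi (s - a) := by
  simp_rw [exp_part_eq]
  rw [MeasureTheory.integral_const_mul,
    setIntegral_Ioi_sub (fun v => Real.exp (-v ^ 2 / 2) / Real.sqrt (2 * Real.pi)) a s,
    integral_phi_Ioi, neg_sub]

lemma crisis_aux (A B s m : ℝ) (hA : 0 < A) (hB : 0 < B) (hs : 0 < s) :
    ∫ u : ℝ, max (A * Real.exp (m + s * u) - B) 0 * (Real.exp (-u ^ 2 / 2) / Real.sqrt (2 * Real.pi))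
      = A * Real.exp (m + s ^ 2 / 2) * Phi ((Real.log (A / B) + m) / s + s)
        - B * Phi ((Real.log (A / B) + m) / s) := by
  set a : ℝ := -((Real.log (A / B) + m) / s) with ha_def
  have ha : a = (Real.log (B / A) - m) / s := by
    rw [ha_def, Real.log_div hB.ne' hA.ne', Real.log_div hA.ne' hB.ne']; ring
  have key : ∀ u : ℝ, (a < u ↔ B < A * Real.exp (m + s * u)) := by
    intro u
    rw [ha, div_lt_iff₀ hs, sub_lt_iff_lt_add, mul_comm]
    rw [Real.log_lt_iff_lt_exp (by positivity), div_lt_iff₀ hA, add_comm (s*u) m, mul_comm]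
  have hind : (fun u : ℝ => max (A * Real.exp (m + s * u) - B) 0
        * (Real.exp (-u ^ 2 / 2) / Real.sqrt (2 * Real.pi)))
      = Set.indicator (Ioi a) (fun u => (A * Real.exp (m + s * u) - B)
        * (Real.exp (-u ^ 2 / 2) / Real.sqrt (2 * Real.pi))) := by
    funext u
    by_cases hu : u ∈ Ioi a
    · rw [Set.indicator_of_mem hu]
      congr 1
      exact max_eq_left (by have := (key u).mp hu; linarith)
    · rw [Set.indicator_of_notMem hu]
      have h0 : A * Real.exp (m + s * u) - B ≤ 0 := by
        have : ¬ B < A * Real.exp (m + s * u) := fun h => hu ((key u).mpr h)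
        linarith [not_lt.mp this]
      rw [max_eq_right h0, zero_mul]
  rw [hind, integral_indicator measurableSet_Ioi]
  have hsplit : ∀ u : ℝ, (A * Real.exp (m + s * u) - B)
        * (Real.exp (-u ^ 2 / 2) / Real.sqrt (2 * Real.pi))
      = (A * Real.exp m) * (Real.exp (s * u) * (Real.exp (-u ^ 2 / 2) / Real.sqrt (2 * Real.pi)))
        - B * (Real.exp (-u ^ 2 / 2) / Real.sqrt (2 * Real.pi)) := by
    intro u; rw [Real.exp_add]; ring
  simp_rw [hsplit]
  rw [integral_sub (((integrable_exp_part s).const_mul (A * Real.exp m)).restrict)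
    ((phi_integrable.const_mul B).restrict), MeasureTheory.integral_const_mul,
    MeasureTheory.integral_const_mul, key_exp, integral_phi_Ioi, ha_def, neg_neg]
  rw [Real.exp_add]
  ring_nf

/-- Crisis-model pricing formula: with `W_T ~ N(0,T)` under the risk-neutral measure,
`E[e^{-rT}(S_T - K)^+] = (S_0 + α/σ)Φ(d₁^α) - (Ke^{-rT} + α/σ)Φ(d₂^α)`. -/
theorem crisis_call_price (S0 K σ α r T : ℝ)
    (hS0 : 0 < S0) (hK : 0 < K) (hσ : 0 < σ) (hα : 0 ≤ α) (hT : 0 < T)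
    (h1 : 0 < S0 + α / σ) (h2 : 0 < K + α / σ * Real.exp (r * T)) :
    ∫ w, Real.exp (-(r * T)) *
        max ((S0 + α / σ) * Real.exp ((r - σ ^ 2 / 2) * T + σ * w)
          - α / σ * Real.exp (r * T) - K) 0
        ∂(gaussianReal 0 ⟨T, hT.le⟩)
      = (S0 + α / σ) *
          Phi ((Real.log ((S0 + α / σ) / (K + α / σ * Real.exp (r * T)))
            + (r + σ ^ 2 / 2) * T) / (σ * Real.sqrt T))
        - (K * Real.exp (-(r * T)) + α / σ) *
          Phi ((Real.log ((S0 + α / σ) / (K + α / σ * Real.exp (r * T)))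
            + (r + σ ^ 2 / 2) * T) / (σ * Real.sqrt T) - σ * Real.sqrt T) := by
  have hsT : 0 < Real.sqrt T := Real.sqrt_pos.mpr hT
  set A : ℝ := S0 + α / σ with hA_def
  set B : ℝ := K + α / σ * Real.exp (r * T) with hB_def
  set s : ℝ := σ * Real.sqrt T with hs_def
  set m : ℝ := (r - σ ^ 2 / 2) * T with hm_def
  have hs : 0 < s := mul_pos hσ hsT
  have hs2 : s ^ 2 = σ ^ 2 * T := by
    rw [hs_def, mul_pow, Real.sq_sqrt hT.le]
  clear_value A B s m
  -- step 1: map to standard gaussian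
  have hmap : Measure.map (fun u : ℝ => Real.sqrt T * u) (gaussianReal 0 1)
      = gaussianReal 0 ⟨T, hT.le⟩ := by
    rw [show (fun u : ℝ => Real.sqrt T * u) = (Real.sqrt T * ·) from rfl,
      gaussianReal_map_const_mul]
    congr 1
    · simp
    · rw [mul_one]
      ext
      exact Real.sq_sqrt hT.le
  have hcont : Continuous (fun w : ℝ => Real.exp (-(r * T)) *
      max (A * Real.exp (m + σ * w) - α / σ * Real.exp (r * T) - K) 0) := by
    fun_prop
  rw [← hmap, integral_map (by fun_prop) hcont.aestronglyMeasurable,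
    gaussianReal_of_var_ne_zero 0 one_ne_zero]
  have hpdf_eq : gaussianPDF 0 1 = fun x : ℝ =>
      ((Real.toNNReal (gaussianPDFReal 0 1 x) : ℝ≥0) : ℝ≥0∞) := rfl
  rw [hpdf_eq, integral_withDensity_eq_integral_smul
    ((measurable_gaussianPDFReal 0 1).real_toNNReal)]
  have hptw : ∀ x : ℝ, (Real.toNNReal (gaussianPDFReal 0 1 x) : ℝ≥0) •
        (Real.exp (-(r * T)) *
          max (A * Real.exp (m + σ * (Real.sqrt T * x))
            - α / σ * Real.exp (r * T) - K) 0)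
      = Real.exp (-(r * T)) * (max (A * Real.exp (m + s * x) - B) 0
          * (Real.exp (-x ^ 2 / 2) / Real.sqrt (2 * Real.pi))) := by
    intro x
    have hg : gaussianPDFReal 0 1 x = Real.exp (-x ^ 2 / 2) / Real.sqrt (2 * Real.pi) := by
      simp only [gaussianPDFReal, NNReal.coe_one, mul_one, sub_zero]
      rw [mul_comm, ← div_eq_mul_inv]
    have harg : m + σ * (Real.sqrt T * x) = m + s * x := by
      rw [hs_def]; ring
    have hB' : A * Real.exp (m + s * x) - α / σ * Real.exp (r * T) - K
        = A * Real.exp (m + s * x) - B := by rw [hB_def]; ring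
    rw [NNReal.smul_def, Real.coe_toNNReal _ (gaussianPDFReal_nonneg 0 1 x), hg, harg, hB',
      smul_eq_mul]
    ring
  simp_rw [hptw]
  rw [MeasureTheory.integral_const_mul, crisis_aux A B s m h1 h2 hs]
  -- final algebra
  have hD1 : (Real.log (A / B) + m) / s + s
      = (Real.log (A / B) + (r + σ ^ 2 / 2) * T) / s := by
    rw [div_add' _ _ _ hs.ne']
    congr 1
    rw [hm_def]
    linear_combination hs2
  have hD2 : (Real.log (A / B) + m) / s
      = (Real.log (A / B) + (r + σ ^ 2 / 2) * T) / s - s := by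
    linarith [hD1]
  have hm2 : m + s ^ 2 / 2 = r * T := by rw [hm_def, hs2]; ring
  rw [hD1, hD2, hm2]
  have hE : Real.exp (-(r * T)) * Real.exp (r * T) = 1 := by
    rw [← Real.exp_add]; simp
  have hBe : B * Real.exp (-(r * T)) = K * Real.exp (-(r * T)) + α / σ := by
    rw [hB_def]
    linear_combination (α / σ) * hE
  linear_combination (A * Phi ((Real.log (A / B) + (r + σ ^ 2 / 2) * T) / s)) * hE
    - Phi ((Real.log (A / B) + (r + σ ^ 2 / 2) * T) / s - s) * hBe
end

section
/- The partial derivative of the call price C with respect to the volatility σ (the Vega) equals (α/σ²)e^{rt}(Φ(d_{t,2}^α) - Φ(d_{t,1}^α)) + (e^{-(d_{t,1}^α)²/2}/√(2π))·(s + (α/σ)e^{rt})·√(T-t). -/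
open Real

/-- d_{t,1}^α of the crisis model. -/
noncomputable def d1 (s K σ α r t T : ℝ) : ℝ :=
  (Real.log ((s + α / σ * Real.exp (r * t)) / (K + α / σ * Real.exp (r * T)))
    + (r + σ ^ 2 / 2) * (T - t)) / (σ * Real.sqrt (T - t))

/-- d_{t,2}^α of the crisis model. -/
noncomputable def d2 (s K σ α r t T : ℝ) : ℝ :=
  d1 s K σ α r t T - σ * Real.sqrt (T - t)

/-- Crisis-model European call price. -/
noncomputable def C (s K σ α r t T : ℝ) : ℝ :=
  (s + α / σ * Real.exp (r * t)) * Phi (d1 s K σ α r t T)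
    - (K * Real.exp (-r * (T - t)) + α / σ * Real.exp (r * t)) * Phi (d2 s K σ α r t T)

lemma integrable_gauss :
    MeasureTheory.Integrable (fun u : ℝ => Real.exp (-u ^ 2 / 2) / Real.sqrt (2 * Real.pi)) := by
  have h := (integrable_exp_neg_mul_sq (by norm_num : (0:ℝ) < 1/2)).div_const
    (Real.sqrt (2 * Real.pi))
  have he : (fun u : ℝ => Real.exp (-u ^ 2 / 2) / Real.sqrt (2 * Real.pi))
      = fun u : ℝ => Real.exp (-(1/2) * u ^ 2) / Real.sqrt (2 * Real.pi) := by
    funext u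
    rw [show -u ^ 2 / 2 = -(1/2) * u ^ 2 by ring]
  rw [he]; exact h

lemma hasDerivAt_Phi (d : ℝ) :
    HasDerivAt Phi (Real.exp (-d ^ 2 / 2) / Real.sqrt (2 * Real.pi)) d := by
  have hfi := integrable_gauss
  have hcont : Continuous (fun u : ℝ => Real.exp (-u ^ 2 / 2) / Real.sqrt (2 * Real.pi)) := by
    fun_prop
  have hPhi : Phi = fun x => Phi 0 + ∫ u in (0:ℝ)..x,
      Real.exp (-u ^ 2 / 2) / Real.sqrt (2 * Real.pi) := by
    funext x
    have := intervalIntegral.integral_Iic_sub_Iic (hfi.integrableOn) (hfi.integrableOn)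
      (a := 0) (b := x)
    unfold Phi
    linarith [this]
  rw [hPhi]
  exact ((hcont.integral_hasStrictDerivAt 0 d).hasDerivAt).const_add _

/-- Vega of the crisis-model call. -/
theorem crisis_vega (s K σ α r t T : ℝ)
    (hs : 0 < s) (hK : 0 < K) (hσ : 0 < σ) (hα : 0 ≤ α)
    (ht : 0 ≤ t) (htT : t < T)
    (h1 : 0 < s + α / σ * Real.exp (r * t))
    (h2 : 0 < K + α / σ * Real.exp (r * T)) :
    HasDerivAt (fun v => C s K v α r t T)
      (α / σ ^ 2 * Real.exp (r * t) * (Phi (d2 s K σ α r t T) - Phi (d1 s K σ α r t T))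
        + Real.exp (-(d1 s K σ α r t T) ^ 2 / 2) / Real.sqrt (2 * Real.pi) *
          (s + α / σ * Real.exp (r * t)) * Real.sqrt (T - t)) σ := by
  have hτ : (0:ℝ) < T - t := by linarith
  have hsq : 0 < Real.sqrt (T - t) := Real.sqrt_pos.mpr hτ
  have hsq2 : Real.sqrt (T - t) ^ 2 = T - t := Real.sq_sqrt hτ.le
  have hne : σ * Real.sqrt (T - t) ≠ 0 := (mul_pos hσ hsq).ne'
  -- derivative of v ↦ α / v
  have hinv : HasDerivAt (fun v : ℝ => α / v) (-(α / σ ^ 2)) σ := by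
    have h := (hasDerivAt_inv hσ.ne').const_mul α
    have : (fun v : ℝ => α * v⁻¹) = fun v : ℝ => α / v := by
      funext v; rw [div_eq_mul_inv]
    rw [this] at h
    refine h.congr_deriv ?_
    ring
  have hA : HasDerivAt (fun v => s + α / v * Real.exp (r * t))
      (-(α / σ ^ 2) * Real.exp (r * t)) σ := by
    exact (hinv.mul_const (Real.exp (r * t))).const_add s
  have hA2 : HasDerivAt (fun v => K + α / v * Real.exp (r * T))
      (-(α / σ ^ 2) * Real.exp (r * T)) σ := by
    exact (hinv.mul_const (Real.exp (r * T))).const_add K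
  have hB : HasDerivAt (fun v => K * Real.exp (-r * (T - t)) + α / v * Real.exp (r * t))
      (-(α / σ ^ 2) * Real.exp (r * t)) σ := by
    exact (hinv.mul_const (Real.exp (r * t))).const_add (K * Real.exp (-r * (T - t)))
  -- derivative of d1 (as some number D1)
  obtain ⟨D1, hd1⟩ : ∃ D, HasDerivAt (fun v => d1 s K v α r t T) D σ := by
    have hlogA := hA.log h1.ne'
    have hlogA2 := hA2.log h2.ne'
    have hpoly : HasDerivAt (fun v : ℝ => (r + v ^ 2 / 2) * (T - t)) (σ * (T - t)) σ := by
      have h := (((hasDerivAt_pow 2 σ).div_const 2).const_add r).mul_const (T - t)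
      refine h.congr_deriv ?_
      push_cast
      ring
    have hN := (hlogA.sub hlogA2).add hpoly
    have hDen : HasDerivAt (fun v : ℝ => v * Real.sqrt (T - t)) (Real.sqrt (T - t)) σ := by
      simpa using (hasDerivAt_id σ).mul_const (Real.sqrt (T - t))
    have hquot := hN.div hDen hne
    refine ⟨_, hquot.congr_of_eventuallyEq ?_⟩
    have hev1 : ∀ᶠ v in nhds σ, 0 < s + α / v * Real.exp (r * t) :=
      hA.continuousAt.eventually (eventually_gt_nhds h1)
    have hev2 : ∀ᶠ v in nhds σ, 0 < K + α / v * Real.exp (r * T) :=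
      hA2.continuousAt.eventually (eventually_gt_nhds h2)
    filter_upwards [hev1, hev2] with v hv1 hv2
    unfold d1
    rw [Real.log_div hv1.ne' hv2.ne']
    rfl
  have hd2 : HasDerivAt (fun v => d2 s K v α r t T) (D1 - 1 * Real.sqrt (T - t)) σ := by
    have h := hd1.sub ((hasDerivAt_id σ).mul_const (Real.sqrt (T - t)))
    exact h.congr_of_eventuallyEq (Filter.Eventually.of_forall fun v => by simp [d2])
  -- the key identity
  have hd1mul : d1 s K σ α r t T * (σ * Real.sqrt (T - t))
      = Real.log (s + α / σ * Real.exp (r * t)) - Real.log (K + α / σ * Real.exp (r * T))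
        + (r + σ ^ 2 / 2) * (T - t) := by
    rw [show d1 s K σ α r t T = (Real.log ((s + α / σ * Real.exp (r * t)) /
        (K + α / σ * Real.exp (r * T))) + (r + σ ^ 2 / 2) * (T - t)) / (σ * Real.sqrt (T - t))
      from rfl, div_mul_cancel₀ _ hne, Real.log_div h1.ne' h2.ne']
  have hBpos : 0 < K * Real.exp (-r * (T - t)) + α / σ * Real.exp (r * t) := by positivity
  have hlogB : Real.log (K * Real.exp (-r * (T - t)) + α / σ * Real.exp (r * t))
      = Real.log (K + α / σ * Real.exp (r * T)) - r * (T - t) := by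
    have hBform : K * Real.exp (-r * (T - t)) + α / σ * Real.exp (r * t)
        = (K + α / σ * Real.exp (r * T)) * Real.exp (-r * (T - t)) := by
      rw [add_mul, mul_assoc, ← Real.exp_add, show r * T + -r * (T - t) = r * t by ring]
    rw [hBform, Real.log_mul h2.ne' (Real.exp_ne_zero _), Real.log_exp]
    ring
  have hid : d1 s K σ α r t T ^ 2 - d2 s K σ α r t T ^ 2
      = 2 * (Real.log (s + α / σ * Real.exp (r * t))
             - Real.log (K * Real.exp (-r * (T - t)) + α / σ * Real.exp (r * t))) := by
    simp only [d2]
    linear_combination 2 * hd1mul + 2 * hlogB - σ ^ 2 * hsq2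
  have key : Real.exp (-(d2 s K σ α r t T) ^ 2 / 2)
        * (K * Real.exp (-r * (T - t)) + α / σ * Real.exp (r * t))
      = Real.exp (-(d1 s K σ α r t T) ^ 2 / 2) * (s + α / σ * Real.exp (r * t)) := by
    have hx : Real.exp (-(d2 s K σ α r t T) ^ 2 / 2)
        = Real.exp (-(d1 s K σ α r t T) ^ 2 / 2)
          * ((s + α / σ * Real.exp (r * t))
            / (K * Real.exp (-r * (T - t)) + α / σ * Real.exp (r * t))) := by
      rw [← Real.exp_log (div_pos h1 hBpos), ← Real.exp_add]
      congr 1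
      rw [Real.log_div h1.ne' hBpos.ne']
      linarith [hid]
    rw [hx]
    field_simp
  -- assemble
  have hP1 : HasDerivAt (fun v => Phi (d1 s K v α r t T))
      (Real.exp (-(d1 s K σ α r t T) ^ 2 / 2) / Real.sqrt (2 * Real.pi) * D1) σ :=
    (hasDerivAt_Phi (d1 s K σ α r t T)).comp (h₂ := Phi) σ hd1
  have hP2 : HasDerivAt (fun v => Phi (d2 s K v α r t T))
      (Real.exp (-(d2 s K σ α r t T) ^ 2 / 2) / Real.sqrt (2 * Real.pi)
        * (D1 - 1 * Real.sqrt (T - t))) σ :=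
    (hasDerivAt_Phi (d2 s K σ α r t T)).comp (h₂ := Phi) σ hd2
  have hC : HasDerivAt (fun v => C s K v α r t T)
      ((-(α / σ ^ 2) * Real.exp (r * t)) * Phi (d1 s K σ α r t T)
        + (s + α / σ * Real.exp (r * t))
          * (Real.exp (-(d1 s K σ α r t T) ^ 2 / 2) / Real.sqrt (2 * Real.pi) * D1)
        - ((-(α / σ ^ 2) * Real.exp (r * t)) * Phi (d2 s K σ α r t T)
          + (K * Real.exp (-r * (T - t)) + α / σ * Real.exp (r * t))
            * (Real.exp (-(d2 s K σ α r t T) ^ 2 / 2) / Real.sqrt (2 * Real.pi)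
              * (D1 - 1 * Real.sqrt (T - t))))) σ := by
    refine HasDerivAt.congr_of_eventuallyEq ((hA.mul hP1).sub (hB.mul hP2))
      (Filter.Eventually.of_forall fun v => ?_)
    simp [C]
  convert hC using 1
  linear_combination (D1 - Real.sqrt (T - t)) / Real.sqrt (2 * Real.pi) * key
end
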